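/- Let U_(1) ≤ U_(2) be the two smallest order statistics of n = (p-1)/2 i.i.d. uniforms on (0, π). Then P(U_(2)² - U_(1)² ≤ 8π²·p^{-2(c+1)}) ≤ 2 - 2·(1 - 2p^{-(c+1)})^{(p-1)/2}, which is O(p^{-c}). -/

import Mathlib

open Real MeasureTheory ProbabilityTheory
open scoped ENNReal

noncomputable def nuU : Measure ℝ := (ENNReal.ofReal π)⁻¹ • volume.restrict (Set.Ioo 0 π)

lemma nuU_Ioi {s : ℝ} (hs : 0 ≤ s) : nuU (Set.Ioi s) = ENNReal.ofReal ((π - s) / π) := by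
  rw [nuU, Measure.smul_apply, Measure.restrict_apply measurableSet_Ioi,
    Set.Ioi_inter_Ioo, max_eq_left hs, Real.volume_Ioo, smul_eq_mul,
    ENNReal.ofReal_div_of_pos pi_pos, ENNReal.div_eq_inv_mul]

instance : IsProbabilityMeasure nuU := by
  constructor
  rw [nuU, Measure.smul_apply, Measure.restrict_apply MeasurableSet.univ, Set.univ_inter,
    Real.volume_Ioo, sub_zero, smul_eq_mul]
  exact ENNReal.inv_mul_cancel (by simp [pi_pos]) ENNReal.ofReal_ne_top

lemma real_int_aux {m : ℕ} (hm : 1 ≤ m) {t : ℝ} (ht : 0 ≤ t) (htπ : t ≤ π) :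
    ∫ a in Set.Ioo 0 π, (max (π - a - t) 0 / π) ^ m
      = (π - t) ^ (m + 1) / ((m + 1) * π ^ m) := by
  have hg : Continuous fun a : ℝ => (max (π - a - t) 0 / π) ^ m :=
    ((((continuous_const.sub continuous_id).sub continuous_const).max
      continuous_const).div_const _).pow _
  rw [← integral_Ioc_eq_integral_Ioo, ← intervalIntegral.integral_of_le pi_pos.le,
    ← intervalIntegral.integral_add_adjacent_intervals (b := π - t)
      (hg.intervalIntegrable _ _) (hg.intervalIntegrable _ _)]
  have h2 : ∫ a in (π - t)..π, (max (π - a - t) 0 / π) ^ m = 0 := by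
    rw [intervalIntegral.integral_congr (g := fun _ => 0)]
    · simp
    · intro a ha
      rw [Set.uIcc_of_le (by linarith)] at ha
      have : max (π - a - t) 0 = 0 := max_eq_right (by linarith [ha.1])
      simp [this, zero_pow (by omega : m ≠ 0)]
  have h1 : ∫ a in (0 : ℝ)..(π - t), (max (π - a - t) 0 / π) ^ m
      = (π - t) ^ (m + 1) / ((m + 1) * π ^ m) := by
    rw [intervalIntegral.integral_congr (g := fun a => ((π - t) - a) ^ m * (π ^ m)⁻¹)]
    · rw [intervalIntegral.integral_mul_const, intervalIntegral.integral_comp_sub_left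
        (fun x => x ^ m) (π - t)]
      simp only [sub_self, sub_zero]
      rw [integral_pow]
      push_cast
      rw [zero_pow (by omega : m + 1 ≠ 0)]
      field_simp
      simp only [sub_zero]
    · intro a ha
      rw [Set.uIcc_of_le (by linarith)] at ha
      have h3 : max (π - a - t) 0 = π - a - t := max_eq_left (by linarith [ha.2])
      simp only [h3, div_pow]
      rw [div_eq_mul_inv]
      ring_nf
  rw [h1, h2, add_zero]

lemma spacing_meas {m : ℕ} (hm : 1 ≤ m) (i : Fin (m + 1)) {t : ℝ} (ht : 0 ≤ t) (htπ : t ≤ π) :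
    Measure.pi (fun _ : Fin (m + 1) => nuU) {x | ∀ j, j ≠ i → x i + t < x j}
      = ENNReal.ofReal (((π - t) / π) ^ (m + 1) / (m + 1)) := by
  have hT : MeasurableSet {p : ℝ × (Fin m → ℝ) | ∀ k, p.1 + t < p.2 k} := by
    rw [show {p : ℝ × (Fin m → ℝ) | ∀ k, p.1 + t < p.2 k}
        = ⋂ k, {p : ℝ × (Fin m → ℝ) | p.1 + t < p.2 k} by ext p; simp]
    exact MeasurableSet.iInter fun k =>
      measurableSet_lt (measurable_fst.add_const t) ((measurable_pi_apply k).comp measurable_snd)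
  have hS : {x : Fin (m + 1) → ℝ | ∀ j, j ≠ i → x i + t < x j}
      = (MeasurableEquiv.piFinSuccAbove (fun _ => ℝ) i) ⁻¹'
        {p : ℝ × (Fin m → ℝ) | ∀ k, p.1 + t < p.2 k} := by
    ext x
    simp only [Set.mem_preimage, Set.mem_setOf_eq, MeasurableEquiv.piFinSuccAbove_apply]
    constructor
    · intro h k; exact h _ (Fin.succAbove_ne i k)
    · intro h j hj
      obtain ⟨k, rfl⟩ := (Fin.exists_succAbove_eq hj)
      exact h k
  rw [hS, (measurePreserving_piFinSuccAbove (fun _ => nuU) i).measure_preimage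
    hT.nullMeasurableSet, Measure.prod_apply hT]
  have hmk : ∀ a : ℝ, (Prod.mk a ⁻¹' {p : ℝ × (Fin m → ℝ) | ∀ k, p.1 + t < p.2 k})
      = Set.univ.pi fun _ => Set.Ioi (a + t) := by
    intro a; ext y; simp [Set.mem_pi]
  simp only [hmk, Measure.pi_pi, Finset.prod_const, Finset.card_univ, Fintype.card_fin]
  have hcong : ∫⁻ a, (nuU (Set.Ioi (a + t))) ^ m ∂nuU
      = ∫⁻ a, ENNReal.ofReal ((max (π - a - t) 0 / π) ^ m) ∂nuU := by
    apply lintegral_congr_ae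
    have hae : ae nuU = ae (volume.restrict (Set.Ioo 0 π)) := by
      rw [nuU]; exact Measure.ae_ennreal_smul_measure_eq (by simp [pi_pos]) _
    rw [Filter.EventuallyEq, hae]
    filter_upwards [ae_restrict_mem measurableSet_Ioo] with a ha
    rw [nuU_Ioi (by linarith [ha.1] : (0:ℝ) ≤ a + t)]
    have hmax : (π - (a + t)) / π = max (π - a - t) 0 / π ∨ π - (a + t) < 0 := by
      rcases le_or_gt 0 (π - a - t) with h | h
      · exact Or.inl (by rw [max_eq_left h]; ring_nf)
      · exact Or.inr (by linarith)
    rcases hmax with h | h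
    · rw [h, ENNReal.ofReal_pow (by positivity)]
    · rw [ENNReal.ofReal_of_nonpos (by apply div_nonpos_of_nonpos_of_nonneg <;> [linarith; exact pi_pos.le]),
        zero_pow (by omega : m ≠ 0), max_eq_right (by linarith), zero_div,
        zero_pow (by omega : m ≠ 0), ENNReal.ofReal_zero]
  rw [hcong, nuU, lintegral_smul_measure,
    ← ofReal_integral_eq_lintegral_ofReal]
  · rw [real_int_aux hm ht htπ, smul_eq_mul, ← ENNReal.div_eq_inv_mul,
      ← ENNReal.ofReal_div_of_pos pi_pos]
    congr 1
    rw [div_pow, div_div, div_div]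
    congr 1
    ring
  · have hg : Continuous fun a : ℝ => (max (π - a - t) 0 / π) ^ m :=
      ((((continuous_const.sub continuous_id).sub continuous_const).max
        continuous_const).div_const _).pow _
    exact (hg.integrableOn_Icc (a := 0) (b := π)).mono_set Set.Ioo_subset_Icc_self
  · exact Filter.Eventually.of_forall fun a => by positivity

lemma map_pi_aux {Ω : Type*} [MeasurableSpace Ω] (μ : Measure Ω) [IsProbabilityMeasure μ]
    {n : ℕ} (U : Fin n → Ω → ℝ) (hmeas : ∀ i, Measurable (U i))
    (hindep : iIndepFun U μ)
    (hunif : ∀ i, Measure.map (U i) μ = nuU) :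
    Measure.map (fun ω j => U j ω) μ = Measure.pi (fun _ => nuU) := by
  refine (Measure.pi_eq fun s hs => ?_).symm
  rw [Measure.map_apply (measurable_pi_lambda _ hmeas) (MeasurableSet.univ_pi hs)]
  have : (fun ω j => U j ω) ⁻¹' Set.univ.pi s = ⋂ i, U i ⁻¹' s i := by
    ext ω; simp [Set.mem_pi]
  rw [this, hindep.meas_iInter fun i => ⟨s i, hs i, rfl⟩]
  exact Finset.prod_congr rfl fun i _ => by
    rw [← Measure.map_apply (hmeas i) (hs i), hunif i]

lemma main_aux {Ω : Type*} [MeasurableSpace Ω] (μ : Measure Ω) [IsProbabilityMeasure μ]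
    (n : ℕ) (hn : 2 ≤ n) {t : ℝ} (ht : 0 < t) (htπ : t ≤ π)
    (U : Fin n → Ω → ℝ) (hmeas : ∀ i, Measurable (U i))
    (hindep : iIndepFun U μ)
    (hunif : ∀ i, Measure.map (U i) μ = nuU)
    (U1 U2 : Ω → ℝ)
    (hU1 : ∀ ω r, r < U1 ω ↔ (Finset.univ.filter (fun i => U i ω ≤ r)).card = 0)
    (hU2 : ∀ ω r, r < U2 ω ↔ (Finset.univ.filter (fun i => U i ω ≤ r)).card ≤ 1) :
    μ {ω | U2 ω ^ 2 - U1 ω ^ 2 ≤ 2 * t ^ 2} ≤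
      ENNReal.ofReal (2 - 2 * ((π - t) / π) ^ n) := by
  obtain ⟨m, rfl⟩ : ∃ m, n = m + 2 := ⟨n - 2, by omega⟩
  set r : ℝ := ((π - t) / π) ^ (m + 2) with hr
  have hπt : 0 ≤ π - t := by linarith
  have hr0 : 0 ≤ r := by positivity
  have hr1 : r ≤ 1 := by
    apply pow_le_one₀ (by positivity)
    rw [div_le_one pi_pos]; linarith
  have hU1le : ∀ ω i, U1 ω ≤ U i ω := by
    intro ω i
    by_contra h
    push_neg at h
    have h2 := (hU1 ω (U i ω)).1 h
    rw [Finset.card_eq_zero, Finset.filter_eq_empty_iff] at h2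
    exact h2 (Finset.mem_univ i) le_rfl
  set A : Set Ω := ⋂ i, U i ⁻¹' Set.Ioi t with hA
  set E : Fin (m + 2) → Set Ω := fun i => {ω | ∀ j, j ≠ i → U i ω + t < U j ω} with hE
  have hincl : {ω | U2 ω ^ 2 - U1 ω ^ 2 ≤ 2 * t ^ 2} ⊆ Aᶜ ∪ (⋃ i, E i)ᶜ := by
    intro ω hω
    by_cases hA' : ω ∈ A
    · by_cases hE' : ω ∈ ⋃ i, E i
      · exfalso
        have h1 : t < U1 ω := by
          rw [hU1, Finset.card_eq_zero, Finset.filter_eq_empty_iff]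
          intro i _
          exact not_le.2 (Set.mem_iInter.1 hA' i)
        obtain ⟨i, hi⟩ := Set.mem_iUnion.1 hE'
        have h2 : U1 ω + t < U2 ω := by
          rw [hU2, Finset.card_le_one]
          have key : ∀ j ∈ Finset.univ.filter (fun j => U j ω ≤ U1 ω + t), j = i := by
            intro j hj
            rw [Finset.mem_filter] at hj
            by_contra hji
            have h3 := hi j hji
            have h4 := hU1le ω i
            linarith [hj.2]
          intro a ha b hb
          rw [key a ha, key b hb]
        rw [Set.mem_setOf_eq] at hω
        nlinarith [h1, h2, ht]
      · exact Or.inr hE'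
    · exact Or.inl hA'
  have hAmeas : MeasurableSet A := MeasurableSet.iInter fun i => (hmeas i) measurableSet_Ioi
  have hμA : μ A = ENNReal.ofReal r := by
    rw [hA, hindep.meas_iInter (fun i => ⟨Set.Ioi t, measurableSet_Ioi, rfl⟩)]
    have hval : ∀ i : Fin (m + 2), μ (U i ⁻¹' Set.Ioi t) = ENNReal.ofReal ((π - t) / π) :=
      fun i => by rw [← Measure.map_apply (hmeas i) measurableSet_Ioi, hunif i, nuU_Ioi ht.le]
    simp only [hval, Finset.prod_const, Finset.card_univ, Fintype.card_fin]
    rw [← ENNReal.ofReal_pow (by positivity)]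
  have hSmeas : ∀ i : Fin (m + 2),
      MeasurableSet {x : Fin (m + 2) → ℝ | ∀ j, j ≠ i → x i + t < x j} := by
    intro i
    have h0 : {x : Fin (m + 2) → ℝ | ∀ j, j ≠ i → x i + t < x j}
        = ⋂ j, {x : Fin (m + 2) → ℝ | j ≠ i → x i + t < x j} := by
      ext x; simp [Set.mem_iInter]
    rw [h0]
    refine MeasurableSet.iInter fun j => ?_
    by_cases hj : j = i
    · simp [hj]
    · have h1 : {x : Fin (m + 2) → ℝ | j ≠ i → x i + t < x j} = {x | x i + t < x j} := by
        ext x; simp [hj]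
      rw [h1]
      exact measurableSet_lt (by fun_prop : Measurable fun x : Fin (m + 2) → ℝ => x i + t) (measurable_pi_apply j)
  have hEmeas : ∀ i, MeasurableSet (E i) := fun i =>
    (measurable_pi_lambda (fun ω j => U j ω) hmeas) (hSmeas i)
  have hμE : ∀ i, μ (E i) = ENNReal.ofReal (r / (m + 2)) := by
    intro i
    have h0 : E i = (fun ω j => U j ω) ⁻¹' {x | ∀ j, j ≠ i → x i + t < x j} := rfl
    rw [h0, ← Measure.map_apply (measurable_pi_lambda _ hmeas) (hSmeas i),
      map_pi_aux μ U hmeas hindep hunif,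
      spacing_meas (m := m + 1) (by omega) i ht.le htπ]
    congr 1
    push_cast
    rw [hr]
    ring_nf
  have hdisj : Pairwise (Function.onFun Disjoint E) := by
    intro i k hik
    rw [Function.onFun, Set.disjoint_left]
    intro ω hi hk
    have h1 := hi k (Ne.symm hik)
    have h2 := hk i hik
    linarith
  have hμU : μ (⋃ i, E i) = ENNReal.ofReal r := by
    rw [measure_iUnion hdisj hEmeas, tsum_fintype]
    simp only [hμE, Finset.sum_const, Finset.card_univ, Fintype.card_fin, nsmul_eq_mul]
    rw [show ((m + 2 : ℕ) : ℝ≥0∞) = ENNReal.ofReal ((m + 2 : ℕ) : ℝ) by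
        rw [ENNReal.ofReal_natCast],
      ← ENNReal.ofReal_mul (by positivity)]
    congr 1
    push_cast
    field_simp
  calc μ {ω | U2 ω ^ 2 - U1 ω ^ 2 ≤ 2 * t ^ 2}
      ≤ μ (Aᶜ ∪ (⋃ i, E i)ᶜ) := measure_mono hincl
    _ ≤ μ Aᶜ + μ (⋃ i, E i)ᶜ := measure_union_le _ _
    _ = (1 - ENNReal.ofReal r) + (1 - ENNReal.ofReal r) := by
        rw [measure_compl hAmeas (measure_ne_top μ A), hμA,
          measure_compl (MeasurableSet.iUnion hEmeas) (measure_ne_top μ _), hμU, measure_univ]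
    _ = ENNReal.ofReal (2 - 2 * r) := by
        rw [← ENNReal.ofReal_one, ← ENNReal.ofReal_sub _ hr0,
          ← ENNReal.ofReal_add (by linarith) (by linarith)]
        congr 1; ring

theorem order_statistic_gap {Ω : Type*} [MeasurableSpace Ω] (μ : Measure Ω)
    [IsProbabilityMeasure μ] (p : ℕ) (hp : p.Prime) (hodd : Odd p) (c : ℝ) (hc : 0 < c)
    (U : Fin ((p - 1) / 2) → Ω → ℝ) (hmeas : ∀ i, Measurable (U i))
    (hindep : iIndepFun U μ)
    (hunif : ∀ i, Measure.map (U i) μ =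
      (ENNReal.ofReal π)⁻¹ • volume.restrict (Set.Ioo 0 π))
    (U1 U2 : Ω → ℝ)
    (hU1 : ∀ ω r, r < U1 ω ↔
      (Finset.univ.filter (fun i => U i ω ≤ r)).card = 0)
    (hU2 : ∀ ω r, r < U2 ω ↔
      (Finset.univ.filter (fun i => U i ω ≤ r)).card ≤ 1) :
    μ {ω | U2 ω ^ 2 - U1 ω ^ 2 ≤ 8 * π ^ 2 * (p : ℝ) ^ (-(2 * (c + 1)))} ≤
      ENNReal.ofReal
        (2 - 2 * (1 - 2 * (p : ℝ) ^ (-(c + 1))) ^ ((p - 1) / 2)) := by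
  have hne : Nonempty Ω := by
    by_contra h
    rw [not_nonempty_iff] at h
    have h1 : μ Set.univ = 1 := measure_univ
    rw [Set.univ_eq_empty_iff.2 h, measure_empty] at h1
    exact zero_ne_one h1
  rcases le_or_gt ((p - 1) / 2) 1 with hn | hn
  · exfalso
    obtain ⟨ω⟩ := hne
    have h := (hU2 ω (U2 ω)).2 (le_trans (Finset.card_filter_le _ _) (by simpa using hn))
    exact lt_irrefl _ h
  have hp3 : 3 ≤ p := by
    have h2 := hp.two_le
    rcases Nat.lt_or_ge p 3 with h | h
    · interval_cases p
      exact absurd hodd (by decide)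
    · exact h
  set ε := (p : ℝ) ^ (-(c + 1)) with hεdef
  have hp1 : (1 : ℝ) ≤ p := by
    have : (3 : ℝ) ≤ p := by exact_mod_cast hp3
    linarith
  have hε0 : 0 < ε := Real.rpow_pos_of_pos (by positivity) _
  have hε3 : ε ≤ 1 / 3 := by
    have h1 : ε ≤ (p : ℝ) ^ (-1 : ℝ) :=
      Real.rpow_le_rpow_of_exponent_le hp1 (by linarith)
    rw [Real.rpow_neg_one] at h1
    have hp3' : (3 : ℝ) ≤ p := by exact_mod_cast hp3
    have h2 : (p : ℝ)⁻¹ ≤ 1 / 3 := by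
      rw [inv_le_comm₀ (by linarith) (by norm_num)]
      linarith
    linarith
  set t := 2 * π * ε with htdef
  have ht : 0 < t := by positivity
  have htπ : t ≤ π := by nlinarith [pi_pos]
  have hpow : 8 * π ^ 2 * (p : ℝ) ^ (-(2 * (c + 1))) = 2 * t ^ 2 := by
    rw [show (-(2 * (c + 1))) = (-(c + 1)) * ((2 : ℕ) : ℝ) by push_cast; ring,
      Real.rpow_mul (by positivity), Real.rpow_natCast, htdef, ← hεdef]
    ring
  have hfrac : (π - t) / π = 1 - 2 * ε := by
    rw [htdef]
    field_simp
  rw [hpow, show (1 - 2 * ε) = (π - t) / π from hfrac.symm]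
  exact main_aux μ _ hn ht htπ U hmeas hindep (fun i => by rw [hunif i]; rfl) U1 U2 hU1 hU2
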